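/- Let G be a group, H₁ ◁ H₂ ≤ G with H₂/H₁ simple, and let N_i = ⋂_{g ∈ G} g H_i g⁻¹ be the normal cores (i = 1, 2). Then N₂/N₁ is isomorphic to a (possibly empty) direct product of copies of H₂/H₁. -/

import Mathlib

open Subgroup QuotientGroup

section Aux

variable {N S : Type*} [Group N] [Group S]

theorem normal_biInf {ι : Type*} (K : ι → Subgroup N) (hn : ∀ i, (K i).Normal)
    (s : Finset ι) : (⨅ i ∈ s, K i).Normal := by
  constructor
  intro x hx g
  simp only [Subgroup.mem_iInf] at hx ⊢
  exact fun i hi => (hn i).conj_mem _ (hx i hi) g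

/-- Chinese remainder for two normal subgroups with `A ⊔ B = ⊤`. -/
noncomputable def crtGroup (A B : Subgroup N) [A.Normal] [B.Normal] (h : A ⊔ B = ⊤) :
    (N ⧸ (A ⊓ B)) ≃* (N ⧸ A) × (N ⧸ B) := by
  have hker : ((QuotientGroup.mk' A).prod (QuotientGroup.mk' B)).ker = A ⊓ B := by
    rw [MonoidHom.ker_prod, QuotientGroup.ker_mk', QuotientGroup.ker_mk']
  have hsurj : Function.Surjective ((QuotientGroup.mk' A).prod (QuotientGroup.mk' B)) := by
    rintro ⟨qa, qb⟩
    obtain ⟨x, rfl⟩ := QuotientGroup.mk'_surjective A qa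
    obtain ⟨y, rfl⟩ := QuotientGroup.mk'_surjective B qb
    have hxy : x⁻¹ * y ∈ (↑(A ⊔ B) : Set N) := by rw [h]; trivial
    rw [Subgroup.mul_normal A B] at hxy
    obtain ⟨a, ha, b, hb, hab⟩ := hxy
    refine ⟨x * a, ?_⟩
    have h1 : (QuotientGroup.mk' A) (x * a) = (QuotientGroup.mk' A) x := by
      rw [QuotientGroup.mk'_eq_mk']
      exact ⟨a⁻¹, A.inv_mem ha, by group⟩
    have h2 : (QuotientGroup.mk' B) (x * a) = (QuotientGroup.mk' B) y := by
      rw [QuotientGroup.mk'_eq_mk']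
      refine ⟨b, hb, ?_⟩
      have hab' : a * b = x⁻¹ * y := hab
      rw [mul_assoc, hab']
      group
    simp only [MonoidHom.prod_apply]
    rw [h1, h2]
  exact (QuotientGroup.quotientMulEquivOfEq hker.symm).trans
    (QuotientGroup.quotientKerEquivOfSurjective _ hsurj)

/-- `S × (Fin r → S) ≃* (Fin (r+1) → S)`. -/
def finConsMulEquiv (r : ℕ) (S : Type*) [Group S] :
    (S × (Fin r → S)) ≃* (Fin (r + 1) → S) where
  toEquiv := Fin.consEquiv (fun _ : Fin (r + 1) => S)
  map_mul' := by
    intro x y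
    funext i
    refine Fin.cases ?_ ?_ i <;> simp [Fin.consEquiv]

theorem key_lemma [IsSimpleGroup S] {ι : Type*} (K : ι → Subgroup N)
    (hn : ∀ i, (K i).Normal)
    (hq : ∀ i, K i = ⊤ ∨ Nonempty (haveI := hn i; (N ⧸ K i) ≃* S)) (s : Finset ι) :
    ∃ r : ℕ, Nonempty (haveI := normal_biInf K hn s; (N ⧸ ⨅ i ∈ s, K i) ≃* (Fin r → S)) := by
  classical
  induction s using Finset.induction_on with
  | empty =>
    refine ⟨0, ⟨?_⟩⟩
    haveI := normal_biInf K hn (∅ : Finset ι)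
    have he : (⨅ i ∈ (∅ : Finset ι), K i) = (⊤ : Subgroup N) := by simp
    haveI : (⊤ : Subgroup N).Normal := inferInstance
    refine (QuotientGroup.quotientMulEquivOfEq he).trans ?_
    haveI := QuotientGroup.subsingleton_quotient_top (G := N)
    haveI : Unique (N ⧸ (⊤ : Subgroup N)) :=
      ⟨⟨1⟩, fun a => Subsingleton.elim a 1⟩
    exact MulEquiv.ofUnique
  | @insert a s ha IH =>
    obtain ⟨r, ⟨e⟩⟩ := IH
    haveI hL : (⨅ i ∈ s, K i).Normal := normal_biInf K hn s
    haveI hA : (K a).Normal := hn a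
    haveI := normal_biInf K hn (insert a s)
    have hins : (⨅ i ∈ insert a s, K i) = K a ⊓ ⨅ i ∈ s, K i := by
      rw [Finset.iInf_insert]
    rcases hq a with htop | hne
    · refine ⟨r, ⟨?_⟩⟩
      have hEq : (⨅ i ∈ insert a s, K i) = ⨅ i ∈ s, K i := by
        rw [hins, htop, top_inf_eq]
      exact (QuotientGroup.quotientMulEquivOfEq hEq).trans e
    · obtain ⟨eS⟩ := hne
      by_cases hLA : (⨅ i ∈ s, K i) ≤ K a
      · refine ⟨r, ⟨?_⟩⟩
        have hEq : (⨅ i ∈ insert a s, K i) = ⨅ i ∈ s, K i := by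
          rw [hins, inf_eq_right.mpr hLA]
        exact (QuotientGroup.quotientMulEquivOfEq hEq).trans e
      · -- the image of L in the simple group N ⧸ K a is a nontrivial normal subgroup
        haveI : Nontrivial (N ⧸ K a) := eS.toEquiv.nontrivial
        haveI : IsSimpleGroup (N ⧸ K a) :=
          IsSimpleGroup.isSimpleGroup_of_surjective eS.symm.toMonoidHom eS.symm.surjective
        set L := ⨅ i ∈ s, K i with hLdef
        have hmapnormal : ((L.map (QuotientGroup.mk' (K a)))).Normal :=
          hL.map _ (QuotientGroup.mk'_surjective (K a))
        have hmap : L.map (QuotientGroup.mk' (K a)) = ⊤ := by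
          rcases hmapnormal.eq_bot_or_eq_top with hbot | htop
          · exfalso
            apply hLA
            intro x hx
            have : (QuotientGroup.mk' (K a)) x ∈ L.map (QuotientGroup.mk' (K a)) :=
              Subgroup.mem_map_of_mem _ hx
            rw [hbot, Subgroup.mem_bot, QuotientGroup.mk'_apply] at this
            exact (QuotientGroup.eq_one_iff x).mp this
          · exact htop
        have hsup : K a ⊔ L = ⊤ := by
          have := congrArg (Subgroup.comap (QuotientGroup.mk' (K a))) hmap
          rw [Subgroup.comap_map_eq, QuotientGroup.ker_mk', Subgroup.comap_top] at this
          rw [sup_comm]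
          exact this
        refine ⟨r + 1, ⟨?_⟩⟩
        have hEq : (⨅ i ∈ insert a s, K i) = K a ⊓ L := hins
        exact (QuotientGroup.quotientMulEquivOfEq hEq).trans
          ((crtGroup (K a) L hsup).trans ((eS.prodCongr e).trans (finConsMulEquiv r S)))

end Aux

theorem stmt_10 {G : Type*} [Group G] [Finite G] (H₁ H₂ : Subgroup G)
    (h12 : H₁ ≤ H₂) [(H₁.subgroupOf H₂).Normal]
    [IsSimpleGroup (H₂ ⧸ H₁.subgroupOf H₂)] :
    haveI : ((H₁.normalCore).subgroupOf H₂.normalCore).Normal :=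
      Subgroup.Normal.subgroupOf (Subgroup.normalCore_normal H₁) _
    ∃ r : ℕ, Nonempty ((H₂.normalCore ⧸ (H₁.normalCore).subgroupOf H₂.normalCore)
      ≃* (Fin r → (H₂ ⧸ H₁.subgroupOf H₂))) := by
  classical
  haveI : Fintype G := Fintype.ofFinite G
  set S := H₂ ⧸ H₁.subgroupOf H₂
  -- conjugation homomorphisms
  have hmem : ∀ (g : G) (x : H₂.normalCore), g⁻¹ * (x : G) * g ∈ H₂ := by
    intro g x
    have := x.2 g⁻¹
    simpa using this
  let c : G → (H₂.normalCore →* H₂) := fun g =>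
    { toFun := fun x => ⟨g⁻¹ * (x : G) * g, hmem g x⟩
      map_one' := by ext; simp
      map_mul' := by intro x y; ext; simp; group }
  let φ : G → (H₂.normalCore →* S) := fun g =>
    (QuotientGroup.mk' (H₁.subgroupOf H₂)).comp (c g)
  have hKnormal : ∀ g, ((φ g).ker).Normal := fun g => MonoidHom.normal_ker _
  -- the intersection of the kernels is the core of H₁
  have hInf : (⨅ g ∈ (Finset.univ : Finset G), (φ g).ker)
      = (H₁.normalCore).subgroupOf H₂.normalCore := by
    ext x
    simp only [Subgroup.mem_iInf, Finset.mem_univ, iInf_pos, MonoidHom.mem_ker,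
      Subgroup.mem_subgroupOf]
    constructor
    · intro h b
      have hb := h b⁻¹
      simp only [φ, MonoidHom.comp_apply, QuotientGroup.mk'_apply] at hb
      rw [QuotientGroup.eq_one_iff, Subgroup.mem_subgroupOf] at hb
      simpa [c] using hb
    · intro h g
      show (φ g) x = 1
      simp only [φ, MonoidHom.comp_apply, QuotientGroup.mk'_apply]
      rw [QuotientGroup.eq_one_iff, Subgroup.mem_subgroupOf]
      simpa [c] using h g⁻¹
  -- each quotient is trivial or isomorphic to S
  have hq : ∀ g, (φ g).ker = ⊤ ∨
      Nonempty (haveI := hKnormal g; (H₂.normalCore ⧸ (φ g).ker) ≃* S) := by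
    intro g
    have hrange : ((φ g).range).Normal := by
      constructor
      rintro - ⟨x, rfl⟩ t
      obtain ⟨⟨y, hy⟩, rfl⟩ := QuotientGroup.mk'_surjective (H₁.subgroupOf H₂) t
      have hx' : g * y * g⁻¹ * (x : G) * (g * y * g⁻¹)⁻¹ ∈ H₂.normalCore :=
        (Subgroup.normalCore_normal H₂).conj_mem _ x.2 _
      refine ⟨⟨_, hx'⟩, ?_⟩
      show (QuotientGroup.mk' (H₁.subgroupOf H₂)) ((c g) _)
        = _ * (QuotientGroup.mk' (H₁.subgroupOf H₂)) ((c g) x) * _⁻¹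
      rw [← map_inv, ← map_mul, ← map_mul]
      congr 1
      ext
      show g⁻¹ * (g * y * g⁻¹ * (x : G) * (g * y * g⁻¹)⁻¹) * g
        = y * (g⁻¹ * (x : G) * g) * y⁻¹
      group
    rcases hrange.eq_bot_or_eq_top with hbot | htop
    · left
      rw [eq_top_iff]
      intro x _
      rw [MonoidHom.mem_ker, ← Subgroup.mem_bot, ← hbot]
      exact ⟨x, rfl⟩
    · right
      exact ⟨QuotientGroup.quotientKerEquivOfSurjective (φ g)
        (MonoidHom.range_eq_top.mp htop)⟩
  obtain ⟨r, ⟨e⟩⟩ := key_lemma (fun g => (φ g).ker) hKnormal hq Finset.univ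
  haveI := normal_biInf (fun g => (φ g).ker) hKnormal Finset.univ
  exact ⟨r, ⟨(QuotientGroup.quotientMulEquivOfEq hInf.symm).trans e⟩⟩
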